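/- Let k be a field, Π = (V, W) a presentation on a set E over k, v₀ ∈ V, X a subset of E, and F a finite subset of E disjoint from X. Let L = {v ∈ V : v↾F = v₀↾F and supp(v) ⊆ supp(v₀) ∪ X}. Then L contains an element v such that supp(v)∖X is minimal, i.e., there is no v' ∈ L with supp(v')∖X a proper subset of supp(v)∖X. -/

import Mathlib

open Function Set

noncomputable section

variable {α k : Type*} [Field k]

/-- Axiom (O2) for a pair of families of subsets of the ground set `E`. -/
def AxO2 (E : Set α) (𝒞 𝒟 : Set (Set α)) : Prop :=
  ∀ P Q : Set α, ∀ e : α, Disjoint P Q → e ∉ P → e ∉ Q → P ∪ Q ∪ {e} = E →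
    (∃ C ∈ 𝒞, e ∈ C ∧ C ⊆ P ∪ {e}) ∨ (∃ D ∈ 𝒟, e ∈ D ∧ D ⊆ Q ∪ {e})

/-- Two vectors are orthogonal: supports intersect finitely and the sum of products is zero. -/
def Orthog (v w : α → k) : Prop :=
  (support v ∩ support w).Finite ∧ ∑ᶠ e, v e * w e = 0

/-- The subspace of `k^α` of functions supported in `E` (the formal meaning of `k^E`). -/
def FunOn (E : Set α) : Submodule k (α → k) where
  carrier := {v | support v ⊆ E}
  add_mem' hf hg := (support_add _ _).trans (union_subset hf hg)
  zero_mem' := by simp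
  smul_mem' c f hf := (support_const_smul_subset c f).trans hf

/-- The set `S(V)` of supports of elements of `V`. -/
def suppSet (V : Submodule k (α → k)) : Set (Set α) := support '' (V : Set (α → k))

/-- A presentation on the ground set `E` over `k`: a pair of orthogonal subspaces of `k^E`
whose families of supports satisfy (O2). -/
def IsPresentationOn (E : Set α) (V W : Submodule k (α → k)) : Prop :=
  V ≤ FunOn E ∧ W ≤ FunOn E ∧ (∀ v ∈ V, ∀ w ∈ W, Orthog v w) ∧
    AxO2 E (suppSet V) (suppSet W)

/-- Minimal nonempty elements of a family of sets. -/
def MinNE (𝒜 : Set (Set α)) (o : Set α) : Prop :=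
  o ∈ 𝒜 ∧ o.Nonempty ∧ ∀ o' ∈ 𝒜, o'.Nonempty → o' ⊆ o → o' = o

/-- A circuit of a matroid: a minimal dependent set. -/
def MatCircuit (M : Matroid α) (C : Set α) : Prop := Minimal M.Dep C

/-- The pair `(V, W)` presents the matroid `M` on ground set `E`. -/
def Presents (E : Set α) (V W : Submodule k (α → k)) (M : Matroid α) : Prop :=
  M.E = E ∧ (∀ C, MatCircuit M C ↔ MinNE (suppSet V) C) ∧
    (∀ D, MatCircuit M✶ D ↔ MinNE (suppSet W) D)

/-- Restriction of a vector to `X`, as a linear endomap of `k^α` (zeroing outside `X`). -/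
def indLM (X : Set α) : (α → k) →ₗ[k] (α → k) where
  toFun v := X.indicator v
  map_add' f g := by
    funext a
    by_cases h : a ∈ X <;> simp [Set.indicator_of_mem, Set.indicator_of_notMem, h]
  map_smul' c f := by
    funext a
    by_cases h : a ∈ X <;> simp [Set.indicator_of_mem, Set.indicator_of_notMem, h]

/-- Contraction `V.X` of a subspace to `X`. -/
def conV (V : Submodule k (α → k)) (X : Set α) : Submodule k (α → k) :=
  Submodule.map (indLM X) V

/-- Restriction of a pair `(V,W)` to the ground set `X`: `(V↾X, W.X)`. -/
def pairRes (Pr : Submodule k (α → k) × Submodule k (α → k)) (X : Set α) :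
    Submodule k (α → k) × Submodule k (α → k) :=
  (Pr.1 ⊓ FunOn X, conV Pr.2 X)

/-- Contraction of a pair `(V,W)` to the ground set `X`: `(V.X, W↾X)`. -/
def pairCon (Pr : Submodule k (α → k) × Submodule k (α → k)) (X : Set α) :
    Submodule k (α → k) × Submodule k (α → k) :=
  (conV Pr.1 X, Pr.2 ⊓ FunOn X)

/-- A set `I` is `Π`-independent (w.r.t. the vector subspace `V`): it includes no
nonempty support of a vector. -/
def PresIndep (V : Submodule k (α → k)) (I : Set α) : Prop :=
  ∀ v ∈ V, support v ⊆ I → v = 0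

end


section Statement11Aux

open Function Set

private lemma mem_chain_of_finite_subset {α : Type*} {𝒞 : Set (Set α)}
    (hchain : IsChain (· ⊆ ·) 𝒞) (hne : 𝒞.Nonempty) {B : Set α} (hB : B.Finite)
    (hBsub : B ⊆ ⋃₀ 𝒞) : ∃ Q ∈ 𝒞, B ⊆ Q := by
  refine Set.Finite.induction_on (motive := fun B _ => B ⊆ ⋃₀ 𝒞 → ∃ Q ∈ 𝒞, B ⊆ Q) B hB ?_ ?_ hBsub
  · obtain ⟨Q, hQ⟩ := hne
    exact fun _ => ⟨Q, hQ, empty_subset _⟩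
  · intro a s _has _hs ih hins
    obtain ⟨Q1, hQ1, hsQ1⟩ := ih ((subset_insert a s).trans hins)
    obtain ⟨Q2, hQ2, haQ2⟩ := hins (mem_insert a s)
    rcases hchain.total hQ1 hQ2 with h12 | h21
    · exact ⟨Q2, hQ2, insert_subset haQ2 (hsQ1.trans h12)⟩
    · exact ⟨Q1, hQ1, insert_subset (h21 haQ2) hsQ1⟩

private lemma chain_witness {α k : Type*} [Field k]
    (E : Set α) (V W : Submodule k (α → k))
    (horth : ∀ v ∈ V, ∀ w ∈ W, Orthog v w)
    (hO2 : AxO2 E (suppSet V) (suppSet W))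
    (Y X F : Set α) (hYE : Y ⊆ E) (hXY : X ⊆ Y) (hFX : Disjoint F X)
    (hWfin : ∀ w ∈ W, (support w ∩ (Y \ X)).Finite)
    (𝒞 : Set (Set α)) (hchain : IsChain (· ⊆ ·) 𝒞) (hne : 𝒞.Nonempty)
    (hQE : ∀ Q ∈ 𝒞, Q ⊆ E \ (X ∪ F)) :
    ∀ (n : ℕ) (g : α → k), {a | a ∈ F ∧ g a ≠ 0}.ncard ≤ n →
      {a | a ∈ F ∧ g a ≠ 0}.Finite →
      (∀ Q ∈ 𝒞, ∃ v, v ∈ V ∧ (∀ a ∈ F, v a = g a) ∧ support v ⊆ Y ∧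
        Disjoint (support v) Q) →
      ∃ v, v ∈ V ∧ (∀ a ∈ F, v a = g a) ∧ support v ⊆ Y ∧
        Disjoint (support v) (⋃₀ 𝒞) := by
  intro n
  induction n with
  | zero =>
    intro g hcard hfin _hw
    have hS : {a | a ∈ F ∧ g a ≠ 0} = ∅ := (Set.ncard_eq_zero hfin).1 (Nat.le_zero.1 hcard)
    refine ⟨0, V.zero_mem, ?_, by simp, by simp⟩
    intro a haF
    by_contra hne0
    have hga : g a ≠ 0 := fun h0 => hne0 (by simp [h0])
    exact (Set.eq_empty_iff_forall_notMem.1 hS a) ⟨haF, hga⟩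
  | succ n ih =>
    intro g hcard hfin hw
    by_cases hz : ∀ a ∈ F, g a = 0
    · refine ⟨0, V.zero_mem, ?_, by simp, by simp⟩
      intro a haF; simp [hz a haF]
    push_neg at hz
    obtain ⟨e₀, he₀F, he₀g⟩ := hz
    obtain ⟨Q₁, hQ₁⟩ := hne
    obtain ⟨v₁', _hv₁'V, hv₁'F, hv₁'Y, -⟩ := hw Q₁ hQ₁
    have he₀Y : e₀ ∈ Y := hv₁'Y (by
      rw [Function.mem_support, hv₁'F e₀ he₀F]; exact he₀g)
    have he₀E : e₀ ∈ E := hYE he₀Y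
    set Qbar := ⋃₀ 𝒞 with hQbar
    set F₀ : Set α := {a | a ∈ F ∧ g a = 0} with hF₀
    set P : Set α := Y \ (Qbar ∪ F₀ ∪ {e₀}) with hPdef
    set Qp : Set α := E \ (P ∪ {e₀}) with hQpdef
    have hdisj : Disjoint P Qp := by
      rw [Set.disjoint_left]
      intro x hxP hxQp
      exact hxQp.2 (Or.inl hxP)
    have he₀P : e₀ ∉ P := fun h => h.2 (mem_union_right _ (mem_singleton e₀))
    have he₀Qp : e₀ ∉ Qp := fun h => h.2 (mem_union_right _ (mem_singleton e₀))
    have hunion : P ∪ Qp ∪ {e₀} = E := by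
      apply Subset.antisymm
      · intro x hx
        rcases hx with hx | hx
        · rcases hx with hx | hx
          · exact hYE hx.1
          · exact hx.1
        · exact (mem_singleton_iff.1 hx) ▸ he₀E
      · intro x hx
        by_cases h1 : x ∈ P
        · exact mem_union_left _ (mem_union_left _ h1)
        by_cases h2 : x = e₀
        · exact mem_union_right _ (mem_singleton_iff.2 h2)
        · refine mem_union_left _ (mem_union_right _ ⟨hx, fun hc => ?_⟩)
          rcases hc with h | h
          · exact h1 h
          · exact h2 (mem_singleton_iff.1 h)
    rcases hO2 P Qp e₀ hdisj he₀P he₀Qp hunion with ⟨C, hCV, he₀C, hCP⟩ | ⟨D, hDW, he₀D, hDQ⟩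
    · -- case (a): a vector v₁ with e₀ ∈ supp v₁ ⊆ P ∪ {e₀}
      obtain ⟨v₁, hv₁V, rfl⟩ := hCV
      have hv₁e₀ : v₁ e₀ ≠ 0 := he₀C
      have hv₁Y : support v₁ ⊆ Y :=
        hCP.trans (union_subset diff_subset (singleton_subset_iff.2 he₀Y))
      have hv₁Qbar : Disjoint (support v₁) Qbar := by
        rw [Set.disjoint_left]
        intro x hx hxQ
        rcases hCP hx with hxP | hxe
        · exact hxP.2 (mem_union_left _ (mem_union_left _ hxQ))
        · obtain ⟨Q, hQ, hxQ'⟩ := hxQ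
          exact ((hQE Q hQ) hxQ').2
            (mem_union_right _ ((mem_singleton_iff.1 hxe).symm ▸ he₀F))
      have hv₁F0 : ∀ a ∈ F, g a = 0 → v₁ a = 0 := by
        intro a haF hag
        by_contra hne0
        rcases hCP (Function.mem_support.2 hne0) with hxP | hxe
        · exact hxP.2 (mem_union_left _ (mem_union_right _ ⟨haF, hag⟩))
        · exact he₀g ((mem_singleton_iff.1 hxe) ▸ hag)
      set c : k := g e₀ / v₁ e₀ with hc
      set g' : α → k := fun a => g a - c * v₁ a with hg'
      have hg'e₀ : g' e₀ = 0 := by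
        simp only [hg', hc]
        rw [div_mul_cancel₀ _ hv₁e₀, sub_self]
      have hsub : {a | a ∈ F ∧ g' a ≠ 0} ⊆ {a | a ∈ F ∧ g a ≠ 0} \ {e₀} := by
        rintro a ⟨haF, hag'⟩
        refine ⟨⟨haF, fun h0 => hag' ?_⟩, fun he => hag' (he ▸ hg'e₀)⟩
        simp [hg', hv₁F0 a haF h0, h0]
      have hfin' : {a | a ∈ F ∧ g' a ≠ 0}.Finite :=
        (hfin.diff (t := {e₀})).subset hsub
      have hcard' : {a | a ∈ F ∧ g' a ≠ 0}.ncard ≤ n := by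
        have h1 : {a | a ∈ F ∧ g' a ≠ 0}.ncard ≤ ({a | a ∈ F ∧ g a ≠ 0} \ {e₀}).ncard :=
          Set.ncard_le_ncard hsub (hfin.diff (t := {e₀}))
        have h2 : ({a | a ∈ F ∧ g a ≠ 0} \ {e₀}).ncard < {a | a ∈ F ∧ g a ≠ 0}.ncard :=
          Set.ncard_diff_singleton_lt_of_mem ⟨he₀F, he₀g⟩ hfin
        exact Nat.lt_succ_iff.1 (lt_of_le_of_lt h1 (lt_of_lt_of_le h2 hcard))
      have hw' : ∀ Q ∈ 𝒞, ∃ v, v ∈ V ∧ (∀ a ∈ F, v a = g' a) ∧ support v ⊆ Y ∧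
          Disjoint (support v) Q := by
        intro Q hQ
        obtain ⟨v, hvV, hvF, hvY, hvQ⟩ := hw Q hQ
        have hsupp : support (v - c • v₁) ⊆ support v ∪ support v₁ := by
          intro x hx
          by_cases h1 : v x = 0
          · by_cases h2 : v₁ x = 0
            · exact absurd (show (v - c • v₁) x = 0 by
                simp [Pi.sub_apply, Pi.smul_apply, h1, h2]) (Function.mem_support.1 hx)
            · exact Or.inr h2
          · exact Or.inl h1
        refine ⟨v - c • v₁, sub_mem hvV (V.smul_mem c hv₁V), ?_, ?_, ?_⟩
        · intro a haF
          simp [Pi.sub_apply, Pi.smul_apply, smul_eq_mul, hvF a haF, hg']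
        · exact hsupp.trans (union_subset hvY hv₁Y)
        · rw [Set.disjoint_left]
          intro x hx hxQ
          rcases hsupp hx with h1 | h2
          · exact Set.disjoint_left.1 hvQ h1 hxQ
          · exact Set.disjoint_left.1 hv₁Qbar h2 (subset_sUnion_of_mem hQ hxQ)
      obtain ⟨u, huV, huF, huY, huQ⟩ := ih g' hcard' hfin' hw'
      have hsupp2 : support (u + c • v₁) ⊆ support u ∪ support v₁ := by
        intro x hx
        by_cases h1 : u x = 0
        · by_cases h2 : v₁ x = 0
          · exact absurd (show (u + c • v₁) x = 0 by
              simp [Pi.add_apply, Pi.smul_apply, h1, h2]) (Function.mem_support.1 hx)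
          · exact Or.inr h2
        · exact Or.inl h1
      refine ⟨u + c • v₁, add_mem huV (V.smul_mem c hv₁V), ?_, ?_, ?_⟩
      · intro a haF
        have := huF a haF
        simp only [Pi.add_apply, Pi.smul_apply, smul_eq_mul, this, hg']
        ring
      · exact hsupp2.trans (union_subset huY hv₁Y)
      · rw [Set.disjoint_left]
        intro x hx hxQ
        rcases hsupp2 hx with h1 | h2
        · exact Set.disjoint_left.1 huQ h1 hxQ
        · exact Set.disjoint_left.1 hv₁Qbar h2 hxQ
    · -- case (b): a covector w would contradict orthogonality
      exfalso
      obtain ⟨w, hwW, rfl⟩ := hDW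
      have hwe₀ : w e₀ ≠ 0 := he₀D
      have hBfin : (support w ∩ Qbar ∩ Y).Finite := by
        refine (hWfin w hwW).subset ?_
        rintro x ⟨⟨hxw, hxQ⟩, hxY⟩
        refine ⟨hxw, hxY, ?_⟩
        obtain ⟨Q, hQ, hxQ'⟩ := hxQ
        exact fun hxX => ((hQE Q hQ) hxQ').2 (Or.inl hxX)
      have hBsub : support w ∩ Qbar ∩ Y ⊆ ⋃₀ 𝒞 := fun x hx => hx.1.2
      obtain ⟨Qs, hQs, hB⟩ := mem_chain_of_finite_subset hchain ⟨Q₁, hQ₁⟩ hBfin hBsub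
      obtain ⟨v, hvV, hvF, hvY, hvQ⟩ := hw Qs hQs
      have hkey : ∀ x, x ≠ e₀ → v x * w x = 0 := by
        intro x hxe
        by_cases hxv : v x = 0
        · simp [hxv]
        by_cases hxw : w x = 0
        · simp [hxw]
        exfalso
        have hxv' : x ∈ support v := hxv
        have hxw' : x ∈ support w := hxw
        have hxY : x ∈ Y := hvY hxv'
        rcases hDQ hxw' with hxQp | hxe'
        · have hx3 : x ∈ Qbar ∪ F₀ ∪ {e₀} := by
            by_contra hno
            exact hxQp.2 (Or.inl ⟨hxY, hno⟩)
          rcases hx3 with (hxQ | hxF0) | hxe'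
          · exact Set.disjoint_left.1 hvQ hxv' (hB ⟨⟨hxw', hxQ⟩, hxY⟩)
          · exact hxv (by rw [hvF x hxF0.1]; exact hxF0.2)
          · exact hxe hxe'
        · exact hxe hxe'
      have horthvw := (horth v hvV w hwW).2
      rw [finsum_eq_single _ e₀ hkey] at horthvw
      rw [hvF e₀ he₀F] at horthvw
      exact (mul_ne_zero he₀g hwe₀) horthvw

end Statement11Aux

/-- Among the vectors `v ∈ V` with `v↾F = v₀↾F` and
`supp v ⊆ supp v₀ ∪ X`, there is one whose support outside `X` is minimal. -/
theorem exists_minimal_support_vector {α k : Type*} [Field k]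
    (E : Set α) (V W : Submodule k (α → k)) (h : IsPresentationOn E V W)
    (v₀ : α → k) (hv₀ : v₀ ∈ V) (X : Set α) (hX : X ⊆ E)
    (F : Set α) (hF : F ⊆ E) (hFfin : F.Finite) (hFX : Disjoint F X) :
    ∃ v ∈ {v : α → k | v ∈ V ∧ (∀ e ∈ F, v e = v₀ e) ∧
        Function.support v ⊆ Function.support v₀ ∪ X},
      ¬ ∃ v' ∈ {v : α → k | v ∈ V ∧ (∀ e ∈ F, v e = v₀ e) ∧
        Function.support v ⊆ Function.support v₀ ∪ X},
        Function.support v' \ X ⊂ Function.support v \ X := by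
  classical
  obtain ⟨hVE, _hWE, horth, hO2⟩ := h
  have hv₀E : support v₀ ⊆ E := hVE hv₀
  have hYE : support v₀ ∪ X ⊆ E := union_subset hv₀E hX
  have hWfin : ∀ w ∈ W, (support w ∩ ((support v₀ ∪ X) \ X)).Finite := by
    intro w hw
    refine ((horth v₀ hv₀ w hw).1).subset ?_
    rintro x ⟨hxw, hxY, hxX⟩
    rcases hxY with h1 | h1
    · exact ⟨h1, hxw⟩
    · exact absurd h1 hxX
  set 𝒮 : Set (Set α) := {Q | Q ⊆ E \ (X ∪ F) ∧ ∃ v, v ∈ V ∧ (∀ a ∈ F, v a = v₀ a) ∧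
      support v ⊆ support v₀ ∪ X ∧ Disjoint (support v) Q} with h𝒮
  have hempty : ∅ ∈ 𝒮 :=
    ⟨empty_subset _, v₀, hv₀, fun _ _ => rfl, subset_union_left, disjoint_empty _⟩
  have hbound : ∀ c ⊆ 𝒮, IsChain (· ⊆ ·) c → c.Nonempty →
      ∃ ub ∈ 𝒮, ∀ s ∈ c, s ⊆ ub := by
    intro c hc hchain hcne
    refine ⟨⋃₀ c, ⟨sUnion_subset fun Q hQ => (hc hQ).1, ?_⟩,
      fun s hs => subset_sUnion_of_mem hs⟩
    exact chain_witness E V W horth hO2 (support v₀ ∪ X) X F hYE subset_union_right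
      hFX hWfin c hchain hcne (fun Q hQ => (hc hQ).1)
      {a | a ∈ F ∧ v₀ a ≠ 0}.ncard v₀ le_rfl (hFfin.subset fun a ha => ha.1)
      (fun Q hQ => (hc hQ).2)
  obtain ⟨m, -, hm⟩ := zorn_subset_nonempty 𝒮 hbound ∅ hempty
  obtain ⟨⟨hmE, v, hvV, hvF, hvY, hvDisj⟩, hmmax⟩ := hm
  refine ⟨v, ⟨hvV, hvF, hvY⟩, ?_⟩
  rintro ⟨v', ⟨hv'V, hv'F, hv'Y⟩, hss⟩
  obtain ⟨a, haV, haV'⟩ := exists_of_ssubset hss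
  have haX : a ∉ X := haV.2
  have hav : v a ≠ 0 := haV.1
  have hav' : v' a = 0 := by
    by_contra hne0
    exact haV' ⟨hne0, haX⟩
  by_cases haF : a ∈ F
  · apply hav
    rw [hvF a haF, ← hv'F a haF, hav']
  · have haE : a ∈ E := hYE (hvY haV.1)
    have hm'S : insert a m ∈ 𝒮 := by
      refine ⟨insert_subset ⟨haE, fun hc => hc.elim haX haF⟩ hmE, v', hv'V, hv'F, hv'Y, ?_⟩
      rw [Set.disjoint_left]
      intro x hx hxm
      rcases hxm with rfl | hxm
      · exact Function.mem_support.1 hx hav'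
      · have hxX : x ∉ X := fun hxX => (hmE hxm).2 (Or.inl hxX)
        have hxv : x ∈ support v \ X := hss.subset ⟨hx, hxX⟩
        exact Set.disjoint_left.1 hvDisj hxv.1 hxm
    have : insert a m ⊆ m := hmmax hm'S (subset_insert a m)
    exact Set.disjoint_left.1 hvDisj hav (this (mem_insert a m))
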